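/- For the Leibniz algebra M₁(k), the linear maps dⱼ (1 ≤ j ≤ n-2) defined by dⱼ(yᵢ) = y_{i+j} for 1 ≤ i ≤ n-j-1 and dⱼ(yᵢ) = 0 otherwise (including dⱼ(yₙ) = 0), and h₁ defined by h₁(yₙ) = y_{n-1}, h₁(yᵢ) = 0 for i ≤ n-1, are all derivations of M₁(k). -/
import Mathlib

/-- Reduce checking the derivation identity to checking it on spanning vectors. -/
lemma deriv_of_basis {V : Type*} [AddCommGroup V] [Module ℂ V] {n : ℕ} (y : ℕ → V)
    (hspan : Submodule.span ℂ (Set.range (fun i : Fin n => y (i.val + 1))) = ⊤)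
    (B : V →ₗ[ℂ] V →ₗ[ℂ] V) (D : V →ₗ[ℂ] V)
    (H : ∀ i j, 1 ≤ i → i ≤ n → 1 ≤ j → j ≤ n →
      D (B (y i) (y j)) = B (D (y i)) (y j) + B (y i) (D (y j))) :
    ∀ x z : V, D (B x z) = B (D x) z + B x (D z) := by
  have key : (LinearMap.llcomp ℂ V V V D).comp B
      = B.comp D + (LinearMap.lcomp ℂ V D).comp B := by
    apply LinearMap.ext_on hspan
    rintro _ ⟨i, rfl⟩
    apply LinearMap.ext_on hspan
    rintro _ ⟨j, rfl⟩
    simpa using H (i.val + 1) (j.val + 1) (by omega) (by have := i.isLt; omega)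
      (by omega) (by have := j.isLt; omega)
  intro x z
  simpa using LinearMap.congr_fun (LinearMap.congr_fun key x) z

theorem M1k_dj_h1_are_derivations
    (n k : ℕ) (hn : 4 ≤ n) (hk3 : 3 ≤ k) (hkn : k ≤ n - 1)
    (V : Type*) [AddCommGroup V] [Module ℂ V]
    (y : ℕ → V)
    (hindep : LinearIndependent ℂ (fun i : Fin n => y (i.val + 1)))
    (hspan : Submodule.span ℂ (Set.range (fun i : Fin n => y (i.val + 1))) = ⊤)
    (B : V →ₗ[ℂ] V →ₗ[ℂ] V)
    (h1 : ∀ i, 1 ≤ i → i ≤ n - 2 → B (y i) (y 1) = y (i + 1))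
    (h2 : ∀ i, 1 ≤ i → i ≤ n - k → B (y i) (y n) = y (k + i - 1))
    (h0 : ∀ i j, 1 ≤ i → i ≤ n → 1 ≤ j → j ≤ n →
      ¬(j = 1 ∧ i ≤ n - 2) → ¬(j = n ∧ i ≤ n - k) → B (y i) (y j) = 0)
    (d : ℕ → V →ₗ[ℂ] V)
    (hdj : ∀ j, 1 ≤ j → j ≤ n - 2 → ∀ i, 1 ≤ i → i ≤ n - j - 1 → d j (y i) = y (i + j))
    (hdjz : ∀ j, 1 ≤ j → j ≤ n - 2 → ∀ i, 1 ≤ i → i ≤ n → ¬(i ≤ n - j - 1) →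
      d j (y i) = 0)
    (h₁ : V →ₗ[ℂ] V)
    (hh1n : h₁ (y n) = y (n - 1))
    (hh1z : ∀ i, 1 ≤ i → i ≤ n - 1 → h₁ (y i) = 0) :
    (∀ j, 1 ≤ j → j ≤ n - 2 →
      ∀ x z : V, d j (B x z) = B (d j x) z + B x (d j z)) ∧
    (∀ x z : V, h₁ (B x z) = B (h₁ x) z + B x (h₁ z)) := by
  constructor
  · intro m hm1 hm2
    apply deriv_of_basis y hspan B (d m)
    intro i j hi1 hin hj1 hjn
    by_cases P1 : j = 1 ∧ i ≤ n - 2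
    · obtain ⟨rfl, hile⟩ := P1
      rw [h1 i hi1 hile]
      have hterm2 : B (y i) (d m (y 1)) = 0 := by
        rw [hdj m hm1 hm2 1 le_rfl (by omega)]
        exact h0 i (1 + m) hi1 hin (by omega) (by omega) (by omega) (by omega)
      by_cases hc : i + m ≤ n - 2
      · rw [hdj m hm1 hm2 (i + 1) (by omega) (by omega),
          hdj m hm1 hm2 i hi1 (by omega),
          h1 (i + m) (by omega) hc, hterm2, add_zero]
        congr 1; omega
      · rw [hdjz m hm1 hm2 (i + 1) (by omega) (by omega) (by omega), hterm2, add_zero]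
        by_cases hc2 : i ≤ n - m - 1
        · rw [hdj m hm1 hm2 i hi1 hc2,
            h0 (i + m) 1 (by omega) (by omega) le_rfl (by omega) (by omega) (by omega)]
        · rw [hdjz m hm1 hm2 i hi1 hin (by omega)]; simp
    · by_cases P2 : j = n ∧ i ≤ n - k
      · obtain ⟨hje, hile⟩ := P2
        rw [hje, h2 i hi1 hile]
        have hterm2 : B (y i) (d m (y n)) = 0 := by
          rw [hdjz m hm1 hm2 n (by omega) le_rfl (by omega)]
          exact map_zero _
        by_cases hc : i + m ≤ n - k
        · rw [hdj m hm1 hm2 (k + i - 1) (by omega) (by omega),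
            hdj m hm1 hm2 i hi1 (by omega),
            h2 (i + m) (by omega) hc, hterm2, add_zero]
          congr 1; omega
        · rw [hdjz m hm1 hm2 (k + i - 1) (by omega) (by omega) (by omega), hterm2, add_zero]
          by_cases hc2 : i ≤ n - m - 1
          · rw [hdj m hm1 hm2 i hi1 hc2,
              h0 (i + m) n (by omega) (by omega) (by omega) le_rfl (by omega) (by omega)]
          · rw [hdjz m hm1 hm2 i hi1 hin (by omega)]; simp
      · rw [h0 i j hi1 hin hj1 hjn P1 P2, map_zero]
        have t1 : B (d m (y i)) (y j) = 0 := by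
          by_cases hc : i ≤ n - m - 1
          · rw [hdj m hm1 hm2 i hi1 hc]
            exact h0 (i + m) j (by omega) (by omega) hj1 hjn (by omega) (by omega)
          · rw [hdjz m hm1 hm2 i hi1 hin (by omega)]; simp
        have t2 : B (y i) (d m (y j)) = 0 := by
          by_cases hc : j ≤ n - m - 1
          · rw [hdj m hm1 hm2 j hj1 hc]
            exact h0 i (j + m) hi1 hin (by omega) (by omega) (by omega) (by omega)
          · rw [hdjz m hm1 hm2 j hj1 hjn (by omega)]; exact map_zero _
        rw [t1, t2, add_zero]
  · apply deriv_of_basis y hspan B h₁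
    intro i j hi1 hin hj1 hjn
    by_cases P1 : j = 1 ∧ i ≤ n - 2
    · obtain ⟨rfl, hile⟩ := P1
      rw [h1 i hi1 hile, hh1z (i + 1) (by omega) (by omega), hh1z i hi1 (by omega),
        hh1z 1 le_rfl (by omega)]
      simp
    · by_cases P2 : j = n ∧ i ≤ n - k
      · obtain ⟨hje, hile⟩ := P2
        rw [hje, h2 i hi1 hile, hh1z (k + i - 1) (by omega) (by omega), hh1z i hi1 (by omega),
          hh1n, h0 i (n - 1) hi1 hin (by omega) (by omega) (by omega) (by omega)]
        simp
      · rw [h0 i j hi1 hin hj1 hjn P1 P2, map_zero]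
        have t1 : B (h₁ (y i)) (y j) = 0 := by
          by_cases hc : i = n
          · rw [hc, hh1n]
            exact h0 (n - 1) j (by omega) (by omega) hj1 hjn (by omega) (by omega)
          · rw [hh1z i hi1 (by omega)]; simp
        have t2 : B (y i) (h₁ (y j)) = 0 := by
          by_cases hc : j = n
          · rw [hc, hh1n]
            exact h0 i (n - 1) hi1 hin (by omega) (by omega) (by omega) (by omega)
          · rw [hh1z j hj1 (by omega)]; exact map_zero _
        rw [t1, t2, add_zero]
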